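/- Let μ be a weakly decreasing sequence of m integers and S ⊆ {1,…,m} a set of rows. Then sort(μ − 1_S) (subtracting 1 in the rows of S and sorting) is weakly decreasing and differs from μ by subtracting 1 in exactly |S| distinct positions; i.e., μ − sort(μ − 1_S) is a 0/1 vector with exactly |S| ones. -/

import Mathlib

/-- The weakly decreasing rearrangement of an integer vector. -/
def sortDesc {m : ℕ} (v : Fin m → ℤ) : Fin m → ℤ :=
  fun i => - ((fun j => - v j) ∘ Tuple.sort (fun j => - v j)) i

lemma card_comp_perm {m : ℕ} (f : Fin m → ℤ) (σ : Equiv.Perm (Fin m)) (a : ℤ) :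
    Fintype.card {i // (f ∘ σ) i ≤ a} = Fintype.card {i // f i ≤ a} :=
  Fintype.card_congr (σ.subtypeEquiv fun i => Iff.rfl)

/-- pointwise monotonicity of ascending sorting -/
lemma sorted_mono {m : ℕ} (u v : Fin m → ℤ) (huv : ∀ i, u i ≤ v i) (j : Fin m) :
    (u ∘ Tuple.sort u) j ≤ (v ∘ Tuple.sort v) j := by
  set g := u ∘ Tuple.sort u with hg
  set g' := v ∘ Tuple.sort v with hg'
  have hgm : Monotone g := Tuple.monotone_sort u
  have hg'm : Monotone g' := Tuple.monotone_sort v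
  rw [← Tuple.lt_card_le_iff_apply_le_of_monotone (a := g' j) (j := j) hgm, ← Fintype.card_subtype]
  have h1 : (j : ℕ) < Fintype.card {i // g' i ≤ g' j} := by
    rw [Fintype.card_subtype, Tuple.lt_card_le_iff_apply_le_of_monotone hg'm]
  refine lt_of_lt_of_le h1 ?_
  rw [hg, hg', card_comp_perm u, card_comp_perm v]
  have : ∀ i, v i ≤ g' j → u i ≤ g' j := fun i h => (huv i).trans h
  exact Fintype.card_subtype_mono _ _ this

lemma sortDesc_mono {m : ℕ} (u v : Fin m → ℤ) (huv : ∀ i, u i ≤ v i) (j : Fin m) :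
    sortDesc u j ≤ sortDesc v j := by
  have := sorted_mono (fun i => -v i) (fun i => -u i) (fun i => neg_le_neg (huv i)) j
  simp only [sortDesc]
  omega

lemma sortDesc_antitone {m : ℕ} (v : Fin m → ℤ) : Antitone (sortDesc v) := by
  intro a b hab
  have := Tuple.monotone_sort (fun j => -v j) hab
  simp only [sortDesc]
  omega

lemma sortDesc_of_antitone {m : ℕ} (v : Fin m → ℤ) (hv : Antitone v) : sortDesc v = v := by
  have hm : Monotone (fun j => -v j) := fun a b hab => neg_le_neg (hv hab)
  have := Tuple.sort_eq_refl_iff_monotone.2 hm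
  funext i
  simp [sortDesc, this]

lemma sortDesc_sum {m : ℕ} (v : Fin m → ℤ) : ∑ i, sortDesc v i = ∑ i, v i := by
  simp only [sortDesc, Function.comp, neg_neg]
  exact Equiv.sum_comp (Tuple.sort fun j => -v j) v

/-- Subtracting 1 from a weakly decreasing integer vector μ in the rows of S and sorting
yields a weakly decreasing vector that differs from μ by subtracting 1 in exactly |S|
distinct positions. -/
theorem sort_subtract_boxes (m : ℕ) (mu : Fin m → ℤ) (hmu : Antitone mu)
    (S : Finset (Fin m)) :
    Antitone (sortDesc fun i => mu i - if i ∈ S then 1 else 0) ∧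
    (∀ i, mu i - sortDesc (fun t => mu t - if t ∈ S then 1 else 0) i = 0 ∨
          mu i - sortDesc (fun t => mu t - if t ∈ S then 1 else 0) i = 1) ∧
    (Finset.univ.filter
        (fun i => mu i - sortDesc (fun t => mu t - if t ∈ S then 1 else 0) i = 1)).card
      = S.card := by
  set nu : Fin m → ℤ := fun t => mu t - if t ∈ S then 1 else 0 with hnu
  set lam := sortDesc nu with hlam
  have hmu' : Antitone (fun t => mu t - 1) := fun a b hab =>
    sub_le_sub_right (hmu hab) 1
  have h01 : ∀ i, mu i - lam i = 0 ∨ mu i - lam i = 1 := by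
    intro i
    have h1 : lam i ≤ mu i := by
      have := sortDesc_mono nu mu (fun t => by simp [hnu]; split <;> omega) i
      rwa [sortDesc_of_antitone mu hmu] at this
    have h2 : mu i - 1 ≤ lam i := by
      have := sortDesc_mono (fun t => mu t - 1) nu
        (fun t => by simp [hnu]; split <;> omega) i
      rwa [sortDesc_of_antitone _ hmu'] at this
    omega
  refine ⟨sortDesc_antitone nu, h01, ?_⟩
  have hsum : ∑ i, (mu i - lam i) = (S.card : ℤ) := by
    rw [Finset.sum_sub_distrib, hlam, sortDesc_sum, hnu, Finset.sum_sub_distrib]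
    simp
  have hfilt : ∑ i, (mu i - lam i)
      = ∑ i ∈ Finset.univ.filter (fun i => mu i - lam i = 1), (mu i - lam i)
        + ∑ i ∈ Finset.univ.filter (fun i => ¬ (mu i - lam i = 1)), (mu i - lam i) :=
    (Finset.sum_filter_add_sum_filter_not _ _ _).symm
  have hA : ∑ i ∈ Finset.univ.filter (fun i => mu i - lam i = 1), (mu i - lam i)
      = ((Finset.univ.filter (fun i => mu i - lam i = 1)).card : ℤ) := by
    rw [Finset.sum_congr rfl (fun i hi => (Finset.mem_filter.1 hi).2)]
    simp
  have hB : ∑ i ∈ Finset.univ.filter (fun i => ¬ (mu i - lam i = 1)), (mu i - lam i) = 0 := by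
    refine Finset.sum_eq_zero fun i hi => ?_
    have := (Finset.mem_filter.1 hi).2
    rcases h01 i with h | h <;> omega
  rw [hfilt, hA, hB, add_zero] at hsum
  exact_mod_cast hsum
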